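/- Let p be a real number with p > 1 and let a be a real number with a ≥ 0. Define x : ℕ → ℝ by x 0 = 0 and x (n+1) = a + (x n)^p (real power, Real.rpow). Then the sequence (x n) converges to a finite limit if and only if a ≤ ((p−1)^(p−1) / p^p)^(1/(p−1)). -/

import Mathlib

open Filter Real

private lemma rpow_tangent {p : ℝ} (hp : 1 < p) {s : ℝ} (hs : 0 ≤ s) :
    s - s ^ p ≤ p ^ (-(1 / (p - 1))) - (p ^ (-(1 / (p - 1)) : ℝ) : ℝ) ^ p := by
  have hp0 : (0 : ℝ) < p := lt_trans one_pos hp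
  have hp1 : (0 : ℝ) < p - 1 := by linarith
  set t : ℝ := p ^ (-(1 / (p - 1))) with ht_def
  have ht0 : 0 < t := Real.rpow_pos_of_pos hp0 _
  have htp1 : t ^ (p - 1) = 1 / p := by
    rw [ht_def, ← Real.rpow_mul hp0.le]
    have : -(1 / (p - 1)) * (p - 1) = -1 := by field_simp
    rw [this, Real.rpow_neg_one, one_div]
  have htp : t ^ p = t / p := by
    have : t ^ p = t ^ (1 + (p - 1)) := by ring_nf
    rw [this, Real.rpow_add ht0, Real.rpow_one, htp1]
    ring
  rcases eq_or_lt_of_le hs with rfl | hs'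
  · rw [Real.zero_rpow hp0.ne', htp]
    have : 0 < t - t / p := by
      rw [sub_pos, div_lt_iff₀ hp0]
      nlinarith
    linarith
  · have hu : (-1 : ℝ) ≤ s / t - 1 := by
      have : 0 ≤ s / t := div_nonneg hs ht0.le
      linarith
    have hb := one_add_mul_self_le_rpow_one_add hu hp.le
    have h2 : 1 + (s / t - 1) = s / t := by ring
    rw [h2, Real.div_rpow hs ht0.le] at hb
    have htpp : 0 < t ^ p := Real.rpow_pos_of_pos ht0 _
    rw [le_div_iff₀ htpp] at hb
    rw [htp] at hb
    have hcalc : (1 + p * (s / t - 1)) * (t / p) = t / p + s - t := by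
      field_simp
      ring
    rw [hcalc] at hb
    rw [htp]
    linarith

theorem continued_power_const_converges_iff (p : ℝ) (hp : 1 < p)
    (a : ℝ) (ha : 0 ≤ a) (x : ℕ → ℝ)
    (hx0 : x 0 = 0) (hx : ∀ n, x (n + 1) = a + x n ^ p) :
    (∃ L : ℝ, Tendsto x atTop (nhds L)) ↔
      a ≤ ((p - 1) ^ (p - 1) / p ^ p) ^ ((1 : ℝ) / (p - 1)) := by
  have hp0 : (0 : ℝ) < p := lt_trans one_pos hp
  have hp1 : (0 : ℝ) < p - 1 := by linarith
  set t : ℝ := p ^ (-(1 / (p - 1))) with ht_def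
  have ht0 : 0 < t := Real.rpow_pos_of_pos hp0 _
  have htp1 : t ^ (p - 1) = 1 / p := by
    rw [ht_def, ← Real.rpow_mul hp0.le]
    have : -(1 / (p - 1)) * (p - 1) = -1 := by field_simp
    rw [this, Real.rpow_neg_one, one_div]
  have htp : t ^ p = t / p := by
    have : t ^ p = t ^ (1 + (p - 1)) := by ring_nf
    rw [this, Real.rpow_add ht0, Real.rpow_one, htp1]
    ring
  -- identify the threshold constant with t - t^p
  have hA : ((p - 1) ^ (p - 1) / p ^ p) ^ ((1 : ℝ) / (p - 1)) = t - t ^ p := by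
    have hq0 : (0 : ℝ) < p ^ ((1 : ℝ) / (p - 1)) := Real.rpow_pos_of_pos hp0 _
    have hT : t = (p ^ ((1 : ℝ) / (p - 1)))⁻¹ := by
      rw [ht_def, Real.rpow_neg hp0.le]
    have e1 : (p - 1) * (1 / (p - 1)) = 1 := by field_simp
    have e2 : p * (1 / (p - 1)) = 1 + 1 / (p - 1) := by field_simp; ring
    rw [Real.div_rpow (Real.rpow_nonneg hp1.le _) (Real.rpow_nonneg hp0.le _),
      ← Real.rpow_mul hp1.le, ← Real.rpow_mul hp0.le, e1, e2, Real.rpow_one,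
      Real.rpow_add hp0, Real.rpow_one, htp, hT]
    field_simp
  have hxnn : ∀ n, 0 ≤ x n := by
    intro n
    induction n with
    | zero => rw [hx0]
    | succ n ih => rw [hx n]; exact add_nonneg ha (Real.rpow_nonneg ih p)
  rw [hA]
  constructor
  · rintro ⟨L, hL⟩
    have hL0 : (0 : ℝ) ≤ L := ge_of_tendsto' hL hxnn
    have hc : ContinuousAt (fun y : ℝ => y ^ p) L :=
      Real.continuousAt_rpow_const L p (Or.inr hp0.le)
    have h1 : Tendsto (fun n => x (n + 1)) atTop (nhds L) :=
      hL.comp (tendsto_add_atTop_nat 1)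
    have h2 : Tendsto (fun n => a + x n ^ p) atTop (nhds (a + L ^ p)) :=
      tendsto_const_nhds.add (hc.tendsto.comp hL)
    have hfun : (fun n => x (n + 1)) = fun n => a + x n ^ p := funext hx
    rw [hfun] at h1
    have hfix : L = a + L ^ p := tendsto_nhds_unique h1 h2
    have := rpow_tangent hp hL0
    rw [← ht_def] at this
    linarith
  · intro ha'
    have hbd : ∀ n, x n ≤ t := by
      intro n
      induction n with
      | zero => rw [hx0]; exact ht0.le
      | succ n ih =>
        rw [hx n]
        have : x n ^ p ≤ t ^ p := Real.rpow_le_rpow (hxnn n) ih hp0.le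
        linarith
    have hmono : ∀ n, x n ≤ x (n + 1) := by
      intro n
      induction n with
      | zero =>
        rw [hx 0, hx0, Real.zero_rpow hp0.ne']
        linarith
      | succ n ih =>
        rw [hx n, hx (n + 1)]
        have : x n ^ p ≤ x (n + 1) ^ p := Real.rpow_le_rpow (hxnn n) ih hp0.le
        linarith
    exact ⟨_, tendsto_atTop_ciSup (monotone_nat_of_le_succ hmono)
      ⟨t, by rintro y ⟨n, rfl⟩; exact hbd n⟩⟩
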